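/- In the 2-category F(X,h) constructed from an L-algebra (X,h), horizontal composition decomposes via whiskering in both orders: for 2-cells α : M ⟶ M' : A → B and β : N ⟶ N' : B → C, one has (β ∘ id_M) ; (id_{N'} ∘ α) = β ∘ α = (id_N ∘ α) ; (β ∘ id_{M'}). -/

import Mathlib

/-! Syntax of the 2-λ-calculus over a 2-signature, following
"Cartesian closed 2-categories and permutation equivalence in
higher-order rewriting". -/

/-- Simple types over a set `S` of sorts: `A ::= s | 1 | A × B | B^A`
(`arr A B` denotes `B^A`). -/
inductive Ty (S : Type) : Type
  | base (s : S)
  | unit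
  | prod (A B : Ty S)
  | arr (A B : Ty S)

/-- A 1-signature over a fixed set `S` of sorts: operations with arities. -/
structure Sig1 (S : Type) : Type 1 where
  Op : Type
  opCtx : Op → List (Ty S)
  opTy : Op → Ty S

variable {S : Type}

/-- Raw λ-terms (de Bruijn indices) over a 1-signature.  Constant
application `const c args` applies an operation to a tuple of terms
(indices `≥ arity` are ignored by the typing rules). -/
inductive Tm (Sg : Sig1 S) : Type
  | var (n : ℕ)
  | unit
  | pair (M N : Tm Sg)
  | fst (M : Tm Sg)
  | snd (M : Tm Sg)
  | lam (A : Ty S) (M : Tm Sg)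
  | app (M N : Tm Sg)
  | const (c : Sg.Op) (args : ℕ → Tm Sg)

namespace Tm

variable {Sg : Sig1 S}

/-- Lift a renaming under a binder. -/
def liftRen (f : ℕ → ℕ) : ℕ → ℕ
  | 0 => 0
  | n + 1 => f n + 1

/-- Renaming of variables. -/
def ren (f : ℕ → ℕ) : Tm Sg → Tm Sg
  | var n => var (f n)
  | unit => unit
  | pair M N => pair (M.ren f) (N.ren f)
  | fst M => fst (M.ren f)
  | snd M => snd (M.ren f)
  | lam A M => lam A (M.ren (liftRen f))
  | app M N => app (M.ren f) (N.ren f)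
  | const c a => const c (fun i => (a i).ren f)

/-- Lift a simultaneous substitution under a binder. -/
def liftSub (σ : ℕ → Tm Sg) : ℕ → Tm Sg
  | 0 => var 0
  | n + 1 => (σ n).ren Nat.succ

/-- Simultaneous substitution. -/
def sub (σ : ℕ → Tm Sg) : Tm Sg → Tm Sg
  | var n => σ n
  | unit => unit
  | pair M N => pair (M.sub σ) (N.sub σ)
  | fst M => fst (M.sub σ)
  | snd M => snd (M.sub σ)
  | lam A M => lam A (M.sub (liftSub σ))
  | app M N => app (M.sub σ) (N.sub σ)
  | const c a => const c (fun i => (a i).sub σ)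

/-- Extension of a substitution by a term (for substituting a single
variable). -/
def cons (M : Tm Sg) (σ : ℕ → Tm Sg) : ℕ → Tm Sg
  | 0 => M
  | n + 1 => σ n

end Tm

/-- Typing judgement `Γ ⊢ M : A` for λ-terms. -/
inductive HasTy (Sg : Sig1 S) : List (Ty S) → Tm Sg → Ty S → Prop
  | var {Γ : List (Ty S)} {n : ℕ} (h : n < Γ.length) :
      HasTy Sg Γ (.var n) (Γ.get ⟨n, h⟩)
  | unit {Γ} : HasTy Sg Γ .unit .unit
  | pair {Γ M N A B} : HasTy Sg Γ M A → HasTy Sg Γ N B →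
      HasTy Sg Γ (.pair M N) (.prod A B)
  | fst {Γ M A B} : HasTy Sg Γ M (.prod A B) → HasTy Sg Γ (.fst M) A
  | snd {Γ M A B} : HasTy Sg Γ M (.prod A B) → HasTy Sg Γ (.snd M) B
  | lam {Γ M A B} : HasTy Sg (A :: Γ) M B → HasTy Sg Γ (.lam A M) (.arr A B)
  | app {Γ M N A B} : HasTy Sg Γ M (.arr A B) → HasTy Sg Γ N A →
      HasTy Sg Γ (.app M N) B
  | const {Γ} {c : Sg.Op} {args : ℕ → Tm Sg}
      (h : ∀ i (hi : i < (Sg.opCtx c).length),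
        HasTy Sg Γ (args i) ((Sg.opCtx c).get ⟨i, hi⟩)) :
      HasTy Sg Γ (.const c args) (Sg.opTy c)

/-- βη-equivalence of well-typed λ-terms. -/
inductive Beq (Sg : Sig1 S) : List (Ty S) → Tm Sg → Tm Sg → Ty S → Prop
  | refl {Γ M A} : HasTy Sg Γ M A → Beq Sg Γ M M A
  | symm {Γ M N A} : Beq Sg Γ M N A → Beq Sg Γ N M A
  | trans {Γ M N P A} : Beq Sg Γ M N A → Beq Sg Γ N P A → Beq Sg Γ M P A
  | pairCong {Γ M M' N N' A B} : Beq Sg Γ M M' A → Beq Sg Γ N N' B →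
      Beq Sg Γ (.pair M N) (.pair M' N') (.prod A B)
  | fstCong {Γ M M' A B} : Beq Sg Γ M M' (.prod A B) →
      Beq Sg Γ (.fst M) (.fst M') A
  | sndCong {Γ M M' A B} : Beq Sg Γ M M' (.prod A B) →
      Beq Sg Γ (.snd M) (.snd M') B
  | lamCong {Γ M M' A B} : Beq Sg (A :: Γ) M M' B →
      Beq Sg Γ (.lam A M) (.lam A M') (.arr A B)
  | appCong {Γ M M' N N' A B} : Beq Sg Γ M M' (.arr A B) → Beq Sg Γ N N' A →
      Beq Sg Γ (.app M N) (.app M' N') B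
  | constCong {Γ} {c : Sg.Op} {args args' : ℕ → Tm Sg}
      (h : ∀ i (hi : i < (Sg.opCtx c).length),
        Beq Sg Γ (args i) (args' i) ((Sg.opCtx c).get ⟨i, hi⟩)) :
      Beq Sg Γ (.const c args) (.const c args') (Sg.opTy c)
  | beta {Γ M N A B} : HasTy Sg (A :: Γ) M B → HasTy Sg Γ N A →
      Beq Sg Γ (.app (.lam A M) N) (M.sub (Tm.cons N .var)) B
  | eta {Γ M A B} : HasTy Sg Γ M (.arr A B) →
      Beq Sg Γ M (.lam A (.app (M.ren Nat.succ) (.var 0))) (.arr A B)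
  | prodBeta1 {Γ M N A B} : HasTy Sg Γ M A → HasTy Sg Γ N B →
      Beq Sg Γ (.fst (.pair M N)) M A
  | prodBeta2 {Γ M N A B} : HasTy Sg Γ M A → HasTy Sg Γ N B →
      Beq Sg Γ (.snd (.pair M N)) N B
  | prodEta {Γ M A B} : HasTy Sg Γ M (.prod A B) →
      Beq Sg Γ M (.pair (.fst M) (.snd M)) (.prod A B)
  | unitEta {Γ M} : HasTy Sg Γ M .unit → Beq Sg Γ M .unit .unit

/-- A 2-signature: a 1-signature together with a set of reduction rules
between parallel terms. -/
structure Sig2 (S : Type) : Type 1 where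
  sig : Sig1 S
  Rule : Type
  ruleCtx : Rule → List (Ty S)
  ruleTy : Rule → Ty S
  lhs : Rule → Tm sig
  rhs : Rule → Tm sig

/-- Raw reduction terms ("proof terms") over a 1-signature `Sg` and a set `R`
of reduction-rule names.  `vcomp P M Q` is the vertical composite
`P ;_M Q`. -/
inductive Rd (Sg : Sig1 S) (R : Type) : Type
  | var (n : ℕ)
  | unit
  | pair (P Q : Rd Sg R)
  | fst (P : Rd Sg R)
  | snd (P : Rd Sg R)
  | lam (A : Ty S) (P : Rd Sg R)
  | app (P Q : Rd Sg R)
  | const (c : Sg.Op) (args : ℕ → Rd Sg R)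
  | rule (r : R) (args : ℕ → Rd Sg R)
  | vcomp (P : Rd Sg R) (M : Tm Sg) (Q : Rd Sg R)

namespace Rd

variable {Sg : Sig1 S} {R R' : Type}

/-- Every term is an identity reduction on itself. -/
def toRd : Tm Sg → Rd Sg R
  | .var n => var n
  | .unit => unit
  | .pair M N => pair (toRd M) (toRd N)
  | .fst M => fst (toRd M)
  | .snd M => snd (toRd M)
  | .lam A M => lam A (toRd M)
  | .app M N => app (toRd M) (toRd N)
  | .const c a => const c (fun i => toRd (a i))

/-- Renaming of variables in reductions. -/
def ren (f : ℕ → ℕ) : Rd Sg R → Rd Sg R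
  | var n => var (f n)
  | unit => unit
  | pair P Q => pair (P.ren f) (Q.ren f)
  | fst P => fst (P.ren f)
  | snd P => snd (P.ren f)
  | lam A P => lam A (P.ren (Tm.liftRen f))
  | app P Q => app (P.ren f) (Q.ren f)
  | const c a => const c (fun i => (a i).ren f)
  | rule r a => rule r (fun i => (a i).ren f)
  | vcomp P M Q => vcomp (P.ren f) (M.ren f) (Q.ren f)

/-- Relabelling of rule names in a reduction. -/
def mapRule (g : R → R') : Rd Sg R → Rd Sg R'
  | var n => var n
  | unit => unit
  | pair P Q => pair (P.mapRule g) (Q.mapRule g)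
  | fst P => fst (P.mapRule g)
  | snd P => snd (P.mapRule g)
  | lam A P => lam A (P.mapRule g)
  | app P Q => app (P.mapRule g) (Q.mapRule g)
  | const c a => const c (fun i => (a i).mapRule g)
  | rule r a => rule (g r) (fun i => (a i).mapRule g)
  | vcomp P M Q => vcomp (P.mapRule g) M (Q.mapRule g)

/-- Lift a tuple of reductions under a binder. -/
def liftRd (Q : ℕ → Rd Sg R) : ℕ → Rd Sg R
  | 0 => var 0
  | n + 1 => (Q n).ren Nat.succ

/-- Extension of a tuple of reductions by a reduction. -/
def consRd (P : Rd Sg R) (τ : ℕ → Rd Sg R) : ℕ → Rd Sg R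
  | 0 => P
  | n + 1 => τ n

end Rd

/-- Left whiskering `M[Q]` of a term `M` by a tuple of reductions `Q`. -/
def lw {Sg : Sig1 S} {R : Type} (Q : ℕ → Rd Sg R) : Tm Sg → Rd Sg R
  | .var n => Q n
  | .unit => .unit
  | .pair M N => .pair (lw Q M) (lw Q N)
  | .fst M => .fst (lw Q M)
  | .snd M => .snd (lw Q M)
  | .lam A M => .lam A (lw (Rd.liftRd Q) M)
  | .app M N => .app (lw Q M) (lw Q N)
  | .const c a => .const c (fun i => lw Q (a i))

/-- Right whiskering `P[N]` of a reduction `P` by a tuple of terms `N`. -/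
def rw {Sg : Sig1 S} {R : Type} (N : ℕ → Tm Sg) : Rd Sg R → Rd Sg R
  | .var n => Rd.toRd (N n)
  | .unit => .unit
  | .pair P Q => .pair (rw N P) (rw N Q)
  | .fst P => .fst (rw N P)
  | .snd P => .snd (rw N P)
  | .lam A P => .lam A (rw (Tm.liftSub N) P)
  | .app P Q => .app (rw N P) (rw N Q)
  | .const c a => .const c (fun i => rw N (a i))
  | .rule r a => .rule r (fun i => rw N (a i))
  | .vcomp P M Q => .vcomp (rw N P) (M.sub N) (rw N Q)

/-- Substitution of a tuple of reductions `Q : N ⟶ N'` into a reduction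
`P : M ⟶ M'`, defined as `P[N] ;_{M'[N]} M'[Q]`. -/
def rdSub {Sg : Sig1 S} {R : Type} (P : Rd Sg R) (N : ℕ → Tm Sg) (M' : Tm Sg)
    (Q : ℕ → Rd Sg R) : Rd Sg R :=
  .vcomp (rw N P) (M'.sub N) (lw Q M')

/-- The typing judgement `Γ ⊢ P : M ⟶ N : A` for reductions. -/
inductive RdJ (X : Sig2 S) : List (Ty S) → Rd X.sig X.Rule → Tm X.sig → Tm X.sig → Ty S → Prop
  | rule {Γ} {r : X.Rule} {args : ℕ → Rd X.sig X.Rule} {Ms Ns : ℕ → Tm X.sig}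
      (h : ∀ i (hi : i < (X.ruleCtx r).length),
        RdJ X Γ (args i) (Ms i) (Ns i) ((X.ruleCtx r).get ⟨i, hi⟩)) :
      RdJ X Γ (.rule r args) ((X.lhs r).sub Ms) ((X.rhs r).sub Ns) (X.ruleTy r)
  | vcomp {Γ P Q M₁ M₂ M₃ A} : RdJ X Γ P M₁ M₂ A → RdJ X Γ Q M₂ M₃ A →
      RdJ X Γ (.vcomp P M₂ Q) M₁ M₃ A
  | var {Γ : List (Ty S)} {n : ℕ} (h : n < Γ.length) :
      RdJ X Γ (.var n) (.var n) (.var n) (Γ.get ⟨n, h⟩)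
  | unit {Γ} : RdJ X Γ .unit .unit .unit .unit
  | const {Γ} {c : X.sig.Op} {args : ℕ → Rd X.sig X.Rule} {Ms Ns : ℕ → Tm X.sig}
      (h : ∀ i (hi : i < (X.sig.opCtx c).length),
        RdJ X Γ (args i) (Ms i) (Ns i) ((X.sig.opCtx c).get ⟨i, hi⟩)) :
      RdJ X Γ (.const c args) (.const c Ms) (.const c Ns) (X.sig.opTy c)
  | lam {Γ P M N A B} : RdJ X (A :: Γ) P M N B →
      RdJ X Γ (.lam A P) (.lam A M) (.lam A N) (.arr A B)
  | app {Γ P Q M M' N N' A B} : RdJ X Γ P M M' (.arr A B) → RdJ X Γ Q N N' A →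
      RdJ X Γ (.app P Q) (.app M N) (.app M' N') B
  | pair {Γ P Q M M' N N' A B} : RdJ X Γ P M M' A → RdJ X Γ Q N N' B →
      RdJ X Γ (.pair P Q) (.pair M N) (.pair M' N') (.prod A B)
  | fst {Γ P M N A B} : RdJ X Γ P M N (.prod A B) →
      RdJ X Γ (.fst P) (.fst M) (.fst N) A
  | snd {Γ P M N A B} : RdJ X Γ P M N (.prod A B) →
      RdJ X Γ (.snd P) (.snd M) (.snd N) B
  | conv {Γ P M N M' N' A} : RdJ X Γ P M N A → Beq X.sig Γ M M' A →
      Beq X.sig Γ N N' A → RdJ X Γ P M' N' A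
/-- Permutation equivalence `Γ ⊢ P ≡ Q : M ⟶ N : A` on reductions:
the congruence generated by the category laws for vertical composition,
β/η-rules at the level of reductions, and the lifting rules. -/
inductive PEq (X : Sig2 S) : List (Ty S) → Rd X.sig X.Rule → Rd X.sig X.Rule → Tm X.sig → Tm X.sig → Ty S → Prop
  -- congruence rules
  | refl {Γ P M N A} : RdJ X Γ P M N A → PEq X Γ P P M N A
  | symm {Γ P Q M N A} : PEq X Γ P Q M N A → PEq X Γ Q P M N A
  | trans {Γ P Q R₀ M N A} : PEq X Γ P Q M N A → PEq X Γ Q R₀ M N A →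
      PEq X Γ P R₀ M N A
  | vcompCong {Γ P P' Q Q' M₁ M₂ M₃ A} : PEq X Γ P P' M₁ M₂ A →
      PEq X Γ Q Q' M₂ M₃ A →
      PEq X Γ (.vcomp P M₂ Q) (.vcomp P' M₂ Q') M₁ M₃ A
  | ruleCong {Γ} {r : X.Rule} {P Q : ℕ → Rd X.sig X.Rule} {Ms Ns : ℕ → Tm X.sig}
      (h : ∀ i (hi : i < (X.ruleCtx r).length),
        PEq X Γ (P i) (Q i) (Ms i) (Ns i) ((X.ruleCtx r).get ⟨i, hi⟩)) :
      PEq X Γ (.rule r P) (.rule r Q) ((X.lhs r).sub Ms) ((X.rhs r).sub Ns) (X.ruleTy r)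
  | constCong {Γ} {c : X.sig.Op} {P Q : ℕ → Rd X.sig X.Rule} {Ms Ns : ℕ → Tm X.sig}
      (h : ∀ i (hi : i < (X.sig.opCtx c).length),
        PEq X Γ (P i) (Q i) (Ms i) (Ns i) ((X.sig.opCtx c).get ⟨i, hi⟩)) :
      PEq X Γ (.const c P) (.const c Q) (.const c Ms) (.const c Ns) (X.sig.opTy c)
  | lamCong {Γ P Q M N A B} : PEq X (A :: Γ) P Q M N B →
      PEq X Γ (.lam A P) (.lam A Q) (.lam A M) (.lam A N) (.arr A B)
  | appCong {Γ P P' Q Q' M M' N N' A B} : PEq X Γ P P' M M' (.arr A B) →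
      PEq X Γ Q Q' N N' A →
      PEq X Γ (.app P Q) (.app P' Q') (.app M N) (.app M' N') B
  | pairCong {Γ P P' Q Q' M M' N N' A B} : PEq X Γ P P' M M' A →
      PEq X Γ Q Q' N N' B →
      PEq X Γ (.pair P Q) (.pair P' Q') (.pair M N) (.pair M' N') (.prod A B)
  | fstCong {Γ P Q M N A B} : PEq X Γ P Q M N (.prod A B) →
      PEq X Γ (.fst P) (.fst Q) (.fst M) (.fst N) A
  | sndCong {Γ P Q M N A B} : PEq X Γ P Q M N (.prod A B) →
      PEq X Γ (.snd P) (.snd Q) (.snd M) (.snd N) B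
  -- category rules
  | assoc {Γ P₁ P₂ P₃ M₁ M₂ M₃ M₄ A} : RdJ X Γ P₁ M₁ M₂ A → RdJ X Γ P₂ M₂ M₃ A →
      RdJ X Γ P₃ M₃ M₄ A →
      PEq X Γ (.vcomp P₁ M₂ (.vcomp P₂ M₃ P₃)) (.vcomp (.vcomp P₁ M₂ P₂) M₃ P₃) M₁ M₄ A
  | unitR {Γ P M N A} : RdJ X Γ P M N A →
      PEq X Γ (.vcomp P N (Rd.toRd N)) P M N A
  | unitL {Γ P M N A} : RdJ X Γ P M N A →
      PEq X Γ (.vcomp (Rd.toRd M) M P) P M N A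
  -- beta and eta rules
  | beta {Γ P Q M M' N N' A B} : RdJ X (A :: Γ) P M M' B → RdJ X Γ Q N N' A →
      PEq X Γ (.app (.lam A P) Q)
        (rdSub P (Tm.cons N Tm.var) M' (Rd.consRd Q (fun n => Rd.var n)))
        (.app (.lam A M) N) (M'.sub (Tm.cons N' Tm.var)) B
  | eta {Γ P M N A B} : RdJ X Γ P M N (.arr A B) →
      PEq X Γ P (.lam A (.app (P.ren Nat.succ) (.var 0))) M N (.arr A B)
  | fstPair {Γ P Q M₁ M₂ N₁ N₂ A B} : RdJ X Γ P M₁ M₂ A → RdJ X Γ Q N₁ N₂ B →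
      PEq X Γ (.fst (.pair P Q)) P (.fst (.pair M₁ N₁)) M₂ A
  | sndPair {Γ P Q M₁ M₂ N₁ N₂ A B} : RdJ X Γ P M₁ M₂ A → RdJ X Γ Q N₁ N₂ B →
      PEq X Γ (.snd (.pair P Q)) Q (.snd (.pair M₁ N₁)) N₂ B
  | pairEta {Γ P M₁ M₂ N₁ N₂ A B} : RdJ X Γ P (.pair M₁ N₁) (.pair M₂ N₂) (.prod A B) →
      PEq X Γ P (.pair (.fst P) (.snd P)) (.pair M₁ N₁) (.pair M₂ N₂) (.prod A B)
  | unitEta {Γ P M N} : RdJ X Γ P M N .unit → PEq X Γ P .unit M N .unit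
  -- lifting rules
  | ruleLift1 {Δ} {r : X.Rule} {P Q : ℕ → Rd X.sig X.Rule} {N₁ N₂ N₃ : ℕ → Tm X.sig}
      (hP : ∀ i (hi : i < (X.ruleCtx r).length),
        RdJ X Δ (P i) (N₁ i) (N₂ i) ((X.ruleCtx r).get ⟨i, hi⟩))
      (hQ : ∀ i (hi : i < (X.ruleCtx r).length),
        RdJ X Δ (Q i) (N₂ i) (N₃ i) ((X.ruleCtx r).get ⟨i, hi⟩)) :
      PEq X Δ (.rule r (fun i => .vcomp (P i) (N₂ i) (Q i)))
        (.vcomp (lw P (X.lhs r)) ((X.lhs r).sub N₂) (.rule r Q))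
        ((X.lhs r).sub N₁) ((X.rhs r).sub N₃) (X.ruleTy r)
  | ruleLift2 {Δ} {r : X.Rule} {P Q : ℕ → Rd X.sig X.Rule} {N₁ N₂ N₃ : ℕ → Tm X.sig}
      (hP : ∀ i (hi : i < (X.ruleCtx r).length),
        RdJ X Δ (P i) (N₁ i) (N₂ i) ((X.ruleCtx r).get ⟨i, hi⟩))
      (hQ : ∀ i (hi : i < (X.ruleCtx r).length),
        RdJ X Δ (Q i) (N₂ i) (N₃ i) ((X.ruleCtx r).get ⟨i, hi⟩)) :
      PEq X Δ (.rule r (fun i => .vcomp (P i) (N₂ i) (Q i)))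
        (.vcomp (.rule r P) ((X.rhs r).sub N₂) (lw Q (X.rhs r)))
        ((X.lhs r).sub N₁) ((X.rhs r).sub N₃) (X.ruleTy r)
  | constLift {Γ} {c : X.sig.Op} {P Q : ℕ → Rd X.sig X.Rule} {M₁ M₂ M₃ : ℕ → Tm X.sig}
      (hP : ∀ i (hi : i < (X.sig.opCtx c).length),
        RdJ X Γ (P i) (M₁ i) (M₂ i) ((X.sig.opCtx c).get ⟨i, hi⟩))
      (hQ : ∀ i (hi : i < (X.sig.opCtx c).length),
        RdJ X Γ (Q i) (M₂ i) (M₃ i) ((X.sig.opCtx c).get ⟨i, hi⟩)) :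
      PEq X Γ (.const c (fun i => .vcomp (P i) (M₂ i) (Q i)))
        (.vcomp (.const c P) (.const c M₂) (.const c Q))
        (.const c M₁) (.const c M₃) (X.sig.opTy c)
  | lamLift {Γ P Q M₁ M₂ M₃ A B} : RdJ X (A :: Γ) P M₁ M₂ B →
      RdJ X (A :: Γ) Q M₂ M₃ B →
      PEq X Γ (.lam A (.vcomp P M₂ Q))
        (.vcomp (.lam A P) (.lam A M₂) (.lam A Q))
        (.lam A M₁) (.lam A M₃) (.arr A B)
  | appLift {Γ P P' Q Q' M₁ M₂ M₃ N₁ N₂ N₃ A B} :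
      RdJ X Γ P M₁ M₂ (.arr A B) → RdJ X Γ P' M₂ M₃ (.arr A B) →
      RdJ X Γ Q N₁ N₂ A → RdJ X Γ Q' N₂ N₃ A →
      PEq X Γ (.app (.vcomp P M₂ P') (.vcomp Q N₂ Q'))
        (.vcomp (.app P Q) (.app M₂ N₂) (.app P' Q'))
        (.app M₁ N₁) (.app M₃ N₃) B
  | pairLift {Γ P P' Q Q' M₁ M₂ M₃ N₁ N₂ N₃ A B} :
      RdJ X Γ P M₁ M₂ A → RdJ X Γ P' M₂ M₃ A →
      RdJ X Γ Q N₁ N₂ B → RdJ X Γ Q' N₂ N₃ B →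
      PEq X Γ (.pair (.vcomp P M₂ P') (.vcomp Q N₂ Q'))
        (.vcomp (.pair P Q) (.pair M₂ N₂) (.pair P' Q'))
        (.pair M₁ N₁) (.pair M₃ N₃) (.prod A B)
  | fstLift {Γ P Q M₁ M₂ M₃ A B} : RdJ X Γ P M₁ M₂ (.prod A B) →
      RdJ X Γ Q M₂ M₃ (.prod A B) →
      PEq X Γ (.fst (.vcomp P M₂ Q)) (.vcomp (.fst P) (.fst M₂) (.fst Q))
        (.fst M₁) (.fst M₃) A
  | sndLift {Γ P Q M₁ M₂ M₃ A B} : RdJ X Γ P M₁ M₂ (.prod A B) →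
      RdJ X Γ Q M₂ M₃ (.prod A B) →
      PEq X Γ (.snd (.vcomp P M₂ Q)) (.vcomp (.snd P) (.snd M₂) (.snd Q))
        (.snd M₁) (.snd M₃) B
  -- endpoints are βη-classes
  | conv {Γ P Q M N M' N' A} : PEq X Γ P Q M N A → Beq X.sig Γ M M' A →
      Beq X.sig Γ N N' A → PEq X Γ P Q M' N' A
/-- The rules of the 2-signature `L X`: reductions over `X` together with
their boundary (which the paper takes modulo permutation equivalence). -/
structure LRule (X : Sig2 S) : Type where
  ctx : List (Ty S)
  red : Rd X.sig X.Rule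
  src : Tm X.sig
  tgt : Tm X.sig
  ty : Ty S

/-- The 2-signature `L X`: same sorts and operations as `X`, and with
reduction rules the reductions over `X`. -/
def LSig (X : Sig2 S) : Sig2 S where
  sig := X.sig
  Rule := LRule X
  ruleCtx := LRule.ctx
  ruleTy := LRule.ty
  lhs := LRule.src
  rhs := LRule.tgt

/-- Source endpoint of a raw reduction. -/
def srcRd (X : Sig2 S) : Rd X.sig X.Rule → Tm X.sig
  | .var n => .var n
  | .unit => .unit
  | .pair P Q => .pair (srcRd X P) (srcRd X Q)
  | .fst P => .fst (srcRd X P)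
  | .snd P => .snd (srcRd X P)
  | .lam A P => .lam A (srcRd X P)
  | .app P Q => .app (srcRd X P) (srcRd X Q)
  | .const c a => .const c (fun i => srcRd X (a i))
  | .rule r a => (X.lhs r).sub (fun i => srcRd X (a i))
  | .vcomp P _ _ => srcRd X P

/-- Target endpoint of a raw reduction. -/
def tgtRd (X : Sig2 S) : Rd X.sig X.Rule → Tm X.sig
  | .var n => .var n
  | .unit => .unit
  | .pair P Q => .pair (tgtRd X P) (tgtRd X Q)
  | .fst P => .fst (tgtRd X P)
  | .snd P => .snd (tgtRd X P)
  | .lam A P => .lam A (tgtRd X P)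
  | .app P Q => .app (tgtRd X P) (tgtRd X Q)
  | .const c a => .const c (fun i => tgtRd X (a i))
  | .rule r a => (X.rhs r).sub (fun i => tgtRd X (a i))
  | .vcomp _ _ Q => tgtRd X Q

/-- The multiplication `μ_X : L (L X) → L X` on reductions: a rule
application `R⟨P₁,…,Pₙ⟩` is interpreted as the substitution `R[μP₁,…,μPₙ]`,
and `μ` commutes with all the other constructors. -/
def mu (X : Sig2 S) : Rd X.sig (LRule X) → Rd X.sig X.Rule
  | .var n => .var n
  | .unit => .unit
  | .pair P Q => .pair (mu X P) (mu X Q)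
  | .fst P => .fst (mu X P)
  | .snd P => .snd (mu X P)
  | .lam A P => .lam A (mu X P)
  | .app P Q => .app (mu X P) (mu X Q)
  | .const c a => .const c (fun i => mu X (a i))
  | .rule Rr a => rdSub Rr.red (fun i => srcRd X (mu X (a i))) Rr.tgt (fun i => mu X (a i))
  | .vcomp P M Q => .vcomp (mu X P) M (mu X Q)

/-- The unit `η` on reductions: `r ↦ r⟨x₁,…,xₙ⟩`. -/
def etaRd (X : Sig2 S) (r : X.Rule) : Rd X.sig X.Rule :=
  .rule r (fun i => .var i)

/-- The unit `η_X : X → L X` on rules. -/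
def etaRule (X : Sig2 S) (r : X.Rule) : LRule X :=
  ⟨X.ruleCtx r, etaRd X r, X.lhs r, X.rhs r, X.ruleTy r⟩

/-- The rule component of `μ_X : L (L X) → L X`. -/
def muRule (X : Sig2 S) (R₀ : LRule (LSig X)) : LRule X :=
  ⟨R₀.ctx, mu X R₀.red, R₀.src, R₀.tgt, R₀.ty⟩


section Aux

variable {Sg : Sig1 S}

open Tm

lemma liftRen_comp (f g : ℕ → ℕ) :
    (fun n => liftRen g (liftRen f n)) = liftRen (fun n => g (f n)) := by
  funext n; cases n <;> rfl

lemma ren_ren (M : Tm Sg) (f g : ℕ → ℕ) :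
    (M.ren f).ren g = M.ren (fun n => g (f n)) := by
  induction M generalizing f g with
  | var n => rfl
  | unit => rfl
  | pair P Q ihP ihQ => simp [Tm.ren, ihP, ihQ]
  | fst P ih => simp [Tm.ren, ih]
  | snd P ih => simp [Tm.ren, ih]
  | lam A P ih => simp [Tm.ren, ih, liftRen_comp]
  | app P Q ihP ihQ => simp [Tm.ren, ihP, ihQ]
  | const c a ih => simp [Tm.ren]; funext i; exact ih i f g

lemma liftSub_liftRen (σ : ℕ → Tm Sg) (f : ℕ → ℕ) :
    (fun n => liftSub σ (liftRen f n)) = liftSub (fun n => σ (f n)) := by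
  funext n; cases n <;> rfl

lemma sub_ren (M : Tm Sg) (f : ℕ → ℕ) (σ : ℕ → Tm Sg) :
    (M.ren f).sub σ = M.sub (fun n => σ (f n)) := by
  induction M generalizing f σ with
  | var n => rfl
  | unit => rfl
  | pair P Q ihP ihQ => simp [Tm.ren, Tm.sub, ihP, ihQ]
  | fst P ih => simp [Tm.ren, Tm.sub, ih]
  | snd P ih => simp [Tm.ren, Tm.sub, ih]
  | lam A P ih => simp [Tm.ren, Tm.sub, ih, liftSub_liftRen]
  | app P Q ihP ihQ => simp [Tm.ren, Tm.sub, ihP, ihQ]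
  | const c a ih => simp [Tm.ren, Tm.sub]; funext i; exact ih i f σ

lemma liftSub_ren (σ : ℕ → Tm Sg) (f : ℕ → ℕ) :
    (fun n => (liftSub σ n).ren (liftRen f)) = liftSub (fun n => (σ n).ren f) := by
  funext n; cases n with
  | zero => rfl
  | succ n =>
    show ((σ n).ren Nat.succ).ren (liftRen f) = ((σ n).ren f).ren Nat.succ
    rw [ren_ren, ren_ren]; rfl

lemma ren_sub (M : Tm Sg) (σ : ℕ → Tm Sg) (f : ℕ → ℕ) :
    (M.sub σ).ren f = M.sub (fun n => (σ n).ren f) := by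
  induction M generalizing σ f with
  | var n => rfl
  | unit => rfl
  | pair P Q ihP ihQ => simp [Tm.ren, Tm.sub, ihP, ihQ]
  | fst P ih => simp [Tm.ren, Tm.sub, ih]
  | snd P ih => simp [Tm.ren, Tm.sub, ih]
  | lam A P ih => simp [Tm.ren, Tm.sub, ih, liftSub_ren]
  | app P Q ihP ihQ => simp [Tm.ren, Tm.sub, ihP, ihQ]
  | const c a ih => simp [Tm.ren, Tm.sub]; funext i; exact ih i σ f

lemma liftSub_var : liftSub (Tm.var : ℕ → Tm Sg) = Tm.var := by
  funext n; cases n <;> rfl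

@[simp] lemma sub_var (M : Tm Sg) : M.sub Tm.var = M := by
  induction M with
  | var n => rfl
  | unit => rfl
  | pair P Q ihP ihQ => simp [Tm.sub, ihP, ihQ]
  | fst P ih => simp [Tm.sub, ih]
  | snd P ih => simp [Tm.sub, ih]
  | lam A P ih => simp [Tm.sub, liftSub_var, ih]
  | app P Q ihP ihQ => simp [Tm.sub, ihP, ihQ]
  | const c a ih => simp [Tm.sub]; funext i; exact ih i

end Aux


section Aux2

variable {Sg : Sig1 S}

open Tm

/-- A renaming `f` is admissible from `Γ` to `Δ`. -/
def GoodRen (Γ Δ : List (Ty S)) (f : ℕ → ℕ) : Prop :=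
  ∀ n (hn : n < Γ.length), ∃ h' : f n < Δ.length, Δ.get ⟨f n, h'⟩ = Γ.get ⟨n, hn⟩

lemma GoodRen.lift {Γ Δ : List (Ty S)} {f : ℕ → ℕ} (hf : GoodRen Γ Δ f) (A : Ty S) :
    GoodRen (A :: Γ) (A :: Δ) (liftRen f) := by
  intro n hn
  cases n with
  | zero => exact ⟨Nat.succ_pos _, rfl⟩
  | succ n =>
    obtain ⟨h', he⟩ := hf n (Nat.lt_of_succ_lt_succ hn)
    exact ⟨Nat.succ_lt_succ h', he⟩

lemma GoodRen.succ (Γ : List (Ty S)) (A : Ty S) : GoodRen Γ (A :: Γ) Nat.succ := by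
  intro n hn
  exact ⟨Nat.succ_lt_succ hn, rfl⟩

lemma HasTy.ren' {Γ Δ : List (Ty S)} {M : Tm Sg} {A : Ty S} (hM : HasTy Sg Γ M A)
    {f : ℕ → ℕ} (hf : GoodRen Γ Δ f) : HasTy Sg Δ (M.ren f) A := by
  induction hM generalizing Δ f with
  | var hn =>
    obtain ⟨h', he⟩ := hf _ hn
    exact he ▸ HasTy.var h'
  | unit => exact HasTy.unit
  | pair _ _ ih1 ih2 => exact HasTy.pair (ih1 hf) (ih2 hf)
  | fst _ ih => exact HasTy.fst (ih hf)
  | snd _ ih => exact HasTy.snd (ih hf)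
  | lam _ ih => exact HasTy.lam (ih (hf.lift _))
  | app _ _ ih1 ih2 => exact HasTy.app (ih1 hf) (ih2 hf)
  | const _ ih => exact HasTy.const (fun i hi => ih i hi hf)

lemma Beq.ren' {Γ Δ : List (Ty S)} {M N : Tm Sg} {A : Ty S} (hMN : Beq Sg Γ M N A)
    {f : ℕ → ℕ} (hf : GoodRen Γ Δ f) : Beq Sg Δ (M.ren f) (N.ren f) A := by
  induction hMN generalizing Δ f with
  | refl hM => exact Beq.refl (hM.ren' hf)
  | symm _ ih => exact Beq.symm (ih hf)
  | trans _ _ ih1 ih2 => exact Beq.trans (ih1 hf) (ih2 hf)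
  | pairCong _ _ ih1 ih2 => exact Beq.pairCong (ih1 hf) (ih2 hf)
  | fstCong _ ih => exact Beq.fstCong (ih hf)
  | sndCong _ ih => exact Beq.sndCong (ih hf)
  | lamCong _ ih => exact Beq.lamCong (ih (hf.lift _))
  | appCong _ _ ih1 ih2 => exact Beq.appCong (ih1 hf) (ih2 hf)
  | constCong _ ih => exact Beq.constCong (fun i hi => ih i hi hf)
  | @beta Γ' M₀ N₀ A₀ B₀ hM hN =>
    have e : (M₀.sub (Tm.cons N₀ Tm.var)).ren f
        = (M₀.ren (liftRen f)).sub (Tm.cons (N₀.ren f) Tm.var) := by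
      rw [ren_sub, sub_ren]
      congr 1
      funext n; cases n <;> rfl
    show Beq Sg Δ (.app (.lam A₀ (M₀.ren (liftRen f))) (N₀.ren f))
      ((M₀.sub (Tm.cons N₀ Tm.var)).ren f) _
    rw [e]
    exact Beq.beta (hM.ren' (hf.lift _)) (hN.ren' hf)
  | @eta Γ' M₀ A₀ B₀ hM =>
    have e : (M₀.ren Nat.succ).ren (liftRen f) = (M₀.ren f).ren Nat.succ := by
      rw [ren_ren, ren_ren]; rfl
    show Beq Sg Δ (M₀.ren f)
      (.lam A₀ (.app ((M₀.ren Nat.succ).ren (liftRen f)) (.var 0))) _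
    rw [e]
    exact Beq.eta (hM.ren' hf)
  | prodBeta1 hM hN => exact Beq.prodBeta1 (hM.ren' hf) (hN.ren' hf)
  | prodBeta2 hM hN => exact Beq.prodBeta2 (hM.ren' hf) (hN.ren' hf)
  | prodEta hM => exact Beq.prodEta (hM.ren' hf)
  | unitEta hM => exact Beq.unitEta (hM.ren' hf)

lemma HasTy.sub' {Γ Δ : List (Ty S)} {M : Tm Sg} {A : Ty S} (hM : HasTy Sg Γ M A)
    {σ : ℕ → Tm Sg} (hσ : ∀ n (hn : n < Γ.length), HasTy Sg Δ (σ n) (Γ.get ⟨n, hn⟩)) :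
    HasTy Sg Δ (M.sub σ) A := by
  induction hM generalizing Δ σ with
  | var hn => exact hσ _ hn
  | unit => exact HasTy.unit
  | pair _ _ ih1 ih2 => exact HasTy.pair (ih1 hσ) (ih2 hσ)
  | fst _ ih => exact HasTy.fst (ih hσ)
  | snd _ ih => exact HasTy.snd (ih hσ)
  | lam _ ih =>
    refine HasTy.lam (ih ?_)
    intro n hn
    cases n with
    | zero => exact HasTy.var (by simp)
    | succ n => exact (hσ n (Nat.lt_of_succ_lt_succ hn)).ren' (GoodRen.succ _ _)
  | app _ _ ih1 ih2 => exact HasTy.app (ih1 hσ) (ih2 hσ)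
  | const _ ih => exact HasTy.const (fun i hi => ih i hi hσ)

lemma RdJ.ren' {X : Sig2 S} {Γ Δ : List (Ty S)} {P : Rd X.sig X.Rule} {M N : Tm X.sig}
    {A : Ty S} (hP : RdJ X Γ P M N A) {f : ℕ → ℕ} (hf : GoodRen Γ Δ f) :
    RdJ X Δ (P.ren f) (M.ren f) (N.ren f) A := by
  induction hP generalizing Δ f with
  | rule _ ih =>
    rw [ren_sub, ren_sub]
    exact RdJ.rule (fun i hi => ih i hi hf)
  | vcomp _ _ ih1 ih2 => exact RdJ.vcomp (ih1 hf) (ih2 hf)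
  | var hn =>
    obtain ⟨h', he⟩ := hf _ hn
    exact he ▸ RdJ.var h'
  | unit => exact RdJ.unit
  | const _ ih => exact RdJ.const (fun i hi => ih i hi hf)
  | lam _ ih => exact RdJ.lam (ih (hf.lift _))
  | app _ _ ih1 ih2 => exact RdJ.app (ih1 hf) (ih2 hf)
  | pair _ _ ih1 ih2 => exact RdJ.pair (ih1 hf) (ih2 hf)
  | fst _ ih => exact RdJ.fst (ih hf)
  | snd _ ih => exact RdJ.snd (ih hf)
  | conv _ hb1 hb2 ih => exact RdJ.conv (ih hf) (hb1.ren' hf) (hb2.ren' hf)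

lemma toRd_rdj {X : Sig2 S} {Γ : List (Ty S)} {M : Tm X.sig} {A : Ty S}
    (hM : HasTy X.sig Γ M A) : RdJ X Γ (Rd.toRd M) M M A := by
  induction hM with
  | var hn => exact RdJ.var hn
  | unit => exact RdJ.unit
  | pair _ _ ih1 ih2 => exact RdJ.pair ih1 ih2
  | fst _ ih => exact RdJ.fst ih
  | snd _ ih => exact RdJ.snd ih
  | lam _ ih => exact RdJ.lam ih
  | app _ _ ih1 ih2 => exact RdJ.app ih1 ih2
  | const _ ih => exact RdJ.const ih

lemma lw_rdj {X : Sig2 S} {Δ : List (Ty S)} {M : Tm X.sig} {C : Ty S}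
    (hM : HasTy X.sig Δ M C) {Γ : List (Ty S)} {Q : ℕ → Rd X.sig X.Rule}
    {Ms Ns : ℕ → Tm X.sig}
    (hQ : ∀ i (hi : i < Δ.length), RdJ X Γ (Q i) (Ms i) (Ns i) (Δ.get ⟨i, hi⟩)) :
    RdJ X Γ (lw Q M) (M.sub Ms) (M.sub Ns) C := by
  induction hM generalizing Γ Q Ms Ns with
  | var hn => exact hQ _ hn
  | unit => exact RdJ.unit
  | pair _ _ ih1 ih2 => exact RdJ.pair (ih1 hQ) (ih2 hQ)
  | fst _ ih => exact RdJ.fst (ih hQ)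
  | snd _ ih => exact RdJ.snd (ih hQ)
  | lam _ ih =>
    refine RdJ.lam (ih ?_)
    intro n hn
    cases n with
    | zero => exact RdJ.var (by simp)
    | succ n =>
      exact (hQ n (Nat.lt_of_succ_lt_succ hn)).ren' (GoodRen.succ _ _)
  | app _ _ ih1 ih2 => exact RdJ.app (ih1 hQ) (ih2 hQ)
  | const _ ih => exact RdJ.const (fun i hi => ih i hi hQ)

end Aux2


section Aux3

variable {Sg : Sig1 S} {R : Type}

open Tm Rd

lemma liftSub_var' : Tm.liftSub (Tm.var : ℕ → Tm Sg) = Tm.var := liftSub_var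

@[simp] lemma rw_var (P : Rd Sg R) : rw Tm.var P = P := by
  induction P with
  | var n => rfl
  | unit => rfl
  | pair P Q ihP ihQ => simp [rw, ihP, ihQ]
  | fst P ih => simp [rw, ih]
  | snd P ih => simp [rw, ih]
  | lam A P ih => simp [rw, liftSub_var, ih]
  | app P Q ihP ihQ => simp [rw, ihP, ihQ]
  | const c a ih => simp [rw]; funext i; exact ih i
  | rule r a ih => simp [rw]; funext i; exact ih i
  | vcomp P M Q ihP ihQ => simp [rw, ihP, ihQ]

lemma liftRd_var : Rd.liftRd (fun i => (Rd.var i : Rd Sg R)) = fun i => Rd.var i := by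
  funext n; cases n <;> rfl

@[simp] lemma lw_varRd (M : Tm Sg) :
    lw (fun i => (Rd.var i : Rd Sg R)) M = Rd.toRd M := by
  induction M with
  | var n => rfl
  | unit => rfl
  | pair P Q ihP ihQ => simp [lw, Rd.toRd, ihP, ihQ]
  | fst P ih => simp [lw, Rd.toRd, ih]
  | snd P ih => simp [lw, Rd.toRd, ih]
  | lam A P ih => simp [lw, Rd.toRd, liftRd_var, ih]
  | app P Q ihP ihQ => simp [lw, Rd.toRd, ihP, ihQ]
  | const c a ih => simp [lw, Rd.toRd]; funext i; exact ih i

lemma rw_toRd (M : Tm Sg) (σ : ℕ → Tm Sg) :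
    rw σ (Rd.toRd M) = (Rd.toRd (M.sub σ) : Rd Sg R) := by
  induction M generalizing σ with
  | var n => rfl
  | unit => rfl
  | pair P Q ihP ihQ => simp [rw, Tm.sub, Rd.toRd, ihP, ihQ]
  | fst P ih => simp [rw, Tm.sub, Rd.toRd, ih]
  | snd P ih => simp [rw, Tm.sub, Rd.toRd, ih]
  | lam A P ih => simp [rw, Tm.sub, Rd.toRd, ih]
  | app P Q ihP ihQ => simp [rw, Tm.sub, Rd.toRd, ihP, ihQ]
  | const c a ih => simp [rw, Tm.sub, Rd.toRd]; funext i; exact ih i σ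

lemma get_single {D : Ty S} {l : List (Ty S)} (h : l = [D]) (i : ℕ)
    (hi : i < l.length) : l.get ⟨i, hi⟩ = D := by
  subst h
  match i, hi with
  | 0, _ => rfl
  | n + 1, hi => simp at hi

end Aux3

/-- In `F(X,h)`, horizontal composition decomposes via whiskering in both
orders: for 2-cells `α : M ⟶ M' : A → B` and `β : N ⟶ N' : B → C`,
`(β ∘ id_M) ; (id_{N'} ∘ α) = β ∘ α = (id_N ∘ α) ; (β ∘ id_{M'})`. -/
theorem horizontal_composition_via_whiskering (X : Sig2 S)
    (h : List (Ty S) → Rd X.sig X.Rule → X.Rule)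
    -- h respects permutation equivalence
    (hPEq : ∀ Γ P Q M N A, PEq X Γ P Q M N A → h Γ P = h Γ Q)
    -- the algebra law h ∘ L(h) = h ∘ μ
    (hAlg : ∀ Γ (T : Rd X.sig (LRule X)),
      h Γ (Rd.mapRule (fun R₀ => h R₀.ctx R₀.red) T) = h Γ (mu X T))
    -- the algebra law h ∘ η = id
    (hEta : ∀ r : X.Rule, h (X.ruleCtx r) (etaRd X r) = r)
    -- rules of X are well-typed
    (hwt : ∀ r : X.Rule, HasTy X.sig (X.ruleCtx r) (X.lhs r) (X.ruleTy r) ∧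
      HasTy X.sig (X.ruleCtx r) (X.rhs r) (X.ruleTy r))
    -- a 2-cell α : M ⟶ M' : A → B
    {A B C : Ty S} (α : X.Rule) (M M' : Tm X.sig)
    (hαc : X.ruleCtx α = [A]) (hαt : X.ruleTy α = B)
    (hαl : X.lhs α = M) (hαr : X.rhs α = M')
    -- a 2-cell β : N ⟶ N' : B → C
    (β : X.Rule) (N N' : Tm X.sig)
    (hβc : X.ruleCtx β = [B]) (hβt : X.ruleTy β = C)
    (hβl : X.lhs β = N) (hβr : X.rhs β = N') :
    (h [A] (.vcomp (etaRd X (h [A] (.rule β (fun _ => Rd.toRd M))))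
        (N'.sub (fun _ => M))
        (etaRd X (h [A] (.rule (h [B] (Rd.toRd N')) (fun _ => etaRd X α))))) =
      h [A] (.rule β (fun _ => etaRd X α))) ∧
    (h [A] (.rule β (fun _ => etaRd X α)) =
      h [A] (.vcomp (etaRd X (h [A] (.rule (h [B] (Rd.toRd N)) (fun _ => etaRd X α))))
        (N.sub (fun _ => M'))
        (etaRd X (h [A] (.rule β (fun _ => Rd.toRd M')))))) := by
  -- basic typing facts
  have hMty : HasTy X.sig [A] M B := by
    have := (hwt α).1; rwa [hαc, hαl, hαt] at this
  have hM'ty : HasTy X.sig [A] M' B := by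
    have := (hwt α).2; rwa [hαc, hαr, hαt] at this
  have hNty : HasTy X.sig [B] N C := by
    have := (hwt β).1; rwa [hβc, hβl, hβt] at this
  have hN'ty : HasTy X.sig [B] N' C := by
    have := (hwt β).2; rwa [hβc, hβr, hβt] at this
  have Jα : RdJ X [A] (etaRd X α) M M' B := by
    have h1 : ∀ i (hi : i < (X.ruleCtx α).length),
        RdJ X [A] (Rd.var i) (Tm.var i) (Tm.var i) ((X.ruleCtx α).get ⟨i, hi⟩) := by
      intro i hi
      have hi' : i < ([A] : List (Ty S)).length := by rw [hαc] at hi; exact hi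
      have := RdJ.var (X := X) (Γ := [A]) (n := i) hi'
      have e : ([A] : List (Ty S)).get ⟨i, hi'⟩ = (X.ruleCtx α).get ⟨i, hi⟩ := by
        rw [get_single rfl i hi', get_single hαc i hi]
      exact e ▸ this
    have := RdJ.rule h1
    rw [hαl, hαr, hαt] at this
    simpa [etaRd] using this
  have JQ0 : RdJ X [A] (Rd.vcomp (etaRd X α) M' (Rd.toRd M')) M M' B := RdJ.vcomp Jα (toRd_rdj hM'ty)
  have J1 : RdJ X [A] (Rd.rule β (fun _ => Rd.toRd M)) (N.sub (fun _ => M)) (N'.sub (fun _ => M)) C := by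
    have := RdJ.rule (fun i hi => (get_single hβc i hi).symm ▸ toRd_rdj hMty)
    rwa [hβl, hβr, hβt] at this
  have J1' : RdJ X [A] (Rd.rule β (fun _ => Rd.toRd M')) (N.sub (fun _ => M')) (N'.sub (fun _ => M')) C := by
    have := RdJ.rule (fun i hi => (get_single hβc i hi).symm ▸ toRd_rdj hM'ty)
    rwa [hβl, hβr, hβt] at this
  have hQB : ∀ i (hi : i < ([B] : List (Ty S)).length),
      RdJ X [A] (Rd.vcomp (etaRd X α) M' (Rd.toRd M')) M M' (([B] : List (Ty S)).get ⟨i, hi⟩) := fun i hi =>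
    (get_single rfl i hi).symm ▸ JQ0
  have J2 : RdJ X [A] (lw (fun _ => (Rd.vcomp (etaRd X α) M' (Rd.toRd M'))) N') (N'.sub (fun _ => M)) (N'.sub (fun _ => M')) C :=
    lw_rdj hN'ty hQB
  have J2' : RdJ X [A] (lw (fun _ => (Rd.vcomp (etaRd X α) M' (Rd.toRd M'))) N) (N.sub (fun _ => M)) (N.sub (fun _ => M')) C :=
    lw_rdj hNty hQB
  have hsubN'M : HasTy X.sig [A] (N'.sub (fun _ => M)) C :=
    hN'ty.sub' (fun n hn => (get_single rfl n hn).symm ▸ hMty)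
  have hsubNM : HasTy X.sig [A] (N.sub (fun _ => M)) C :=
    hNty.sub' (fun n hn => (get_single rfl n hn).symm ▸ hMty)
  -- computation of μ
  have hvar1 : (fun i => srcRd X (mu X (Rd.var i : Rd X.sig (LRule X)))) = Tm.var := rfl
  have hvar2 : (fun i => mu X (Rd.var i : Rd X.sig (LRule X))) = (fun i => Rd.var i) := rfl
  have hQ0eq : mu X (Rd.rule (etaRule X α) (fun j => Rd.var j)) = (Rd.vcomp (etaRd X α) M' (Rd.toRd M')) := by
    show rdSub (etaRd X α) (fun i => srcRd X (mu X (Rd.var i))) (X.rhs α)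
      (fun i => mu X (Rd.var i)) = _
    rw [rdSub, hvar1, hvar2, rw_var, sub_var, lw_varRd, hαr]
  have hsrcQ0 : srcRd X (Rd.vcomp (etaRd X α) M' (Rd.toRd M')) = M := by
    show (X.lhs α).sub (fun i => srcRd X (Rd.var i : Rd X.sig X.Rule)) = M
    rw [show (fun i => srcRd X (Rd.var i : Rd X.sig X.Rule)) = Tm.var from rfl, sub_var, hαl]
  have hmuT2 : mu X (Rd.rule (⟨[B], Rd.toRd N', N', N', C⟩ : LRule X) (fun _ => Rd.rule (etaRule X α) (fun j => Rd.var j)))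
      = Rd.vcomp (Rd.toRd (N'.sub (fun _ => M))) (N'.sub (fun _ => M)) (lw (fun _ => (Rd.vcomp (etaRd X α) M' (Rd.toRd M'))) N') := by
    show rdSub (Rd.toRd N') (fun _ => srcRd X (mu X (Rd.rule (etaRule X α) (fun j => Rd.var j)))) N'
      (fun _ => mu X (Rd.rule (etaRule X α) (fun j => Rd.var j))) = _
    simp only [rdSub, hQ0eq, hsrcQ0, rw_toRd]
  have hmuT2' : mu X (Rd.rule (⟨[B], Rd.toRd N, N, N, C⟩ : LRule X) (fun _ => Rd.rule (etaRule X α) (fun j => Rd.var j)))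
      = Rd.vcomp (Rd.toRd (N.sub (fun _ => M))) (N.sub (fun _ => M)) (lw (fun _ => (Rd.vcomp (etaRd X α) M' (Rd.toRd M'))) N) := by
    show rdSub (Rd.toRd N) (fun _ => srcRd X (mu X (Rd.rule (etaRule X α) (fun j => Rd.var j)))) N
      (fun _ => mu X (Rd.rule (etaRule X α) (fun j => Rd.var j))) = _
    simp only [rdSub, hQ0eq, hsrcQ0, rw_toRd]
  have J5 : RdJ X [A] (mu X (Rd.rule (⟨[B], Rd.toRd N', N', N', C⟩ : LRule X) (fun _ => Rd.rule (etaRule X α) (fun j => Rd.var j)))) (N'.sub (fun _ => M)) (N'.sub (fun _ => M')) C := by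
    rw [hmuT2]; exact RdJ.vcomp (toRd_rdj hsubN'M) J2
  have J5' : RdJ X [A] (mu X (Rd.rule (⟨[B], Rd.toRd N, N, N, C⟩ : LRule X) (fun _ => Rd.rule (etaRule X α) (fun j => Rd.var j)))) (N.sub (fun _ => M)) (N.sub (fun _ => M')) C := by
    rw [hmuT2']; exact RdJ.vcomp (toRd_rdj hsubNM) J2'
  have hmuT : mu X (Rd.vcomp (Rd.rule (⟨[A], Rd.rule β (fun _ => Rd.toRd M), N.sub (fun _ => M), N'.sub (fun _ => M), C⟩ : LRule X) (fun j => Rd.var j)) (N'.sub (fun _ => M)) (Rd.rule (⟨[A], mu X (Rd.rule (⟨[B], Rd.toRd N', N', N', C⟩ : LRule X) (fun _ => Rd.rule (etaRule X α) (fun j => Rd.var j))), N'.sub (fun _ => M), N'.sub (fun _ => M'), C⟩ : LRule X) (fun j => Rd.var j)))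
      = Rd.vcomp
          (Rd.vcomp (Rd.rule β (fun _ => Rd.toRd M)) (N'.sub (fun _ => M)) (Rd.toRd (N'.sub (fun _ => M))))
          (N'.sub (fun _ => M))
          (Rd.vcomp (mu X (Rd.rule (⟨[B], Rd.toRd N', N', N', C⟩ : LRule X) (fun _ => Rd.rule (etaRule X α) (fun j => Rd.var j)))) (N'.sub (fun _ => M')) (Rd.toRd (N'.sub (fun _ => M')))) := by
    show Rd.vcomp
        (rdSub (Rd.rule β (fun _ => Rd.toRd M)) (fun i => srcRd X (mu X (Rd.var i)))
          (N'.sub (fun _ => M)) (fun i => mu X (Rd.var i)))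
        (N'.sub (fun _ => M))
        (rdSub (mu X (Rd.rule (⟨[B], Rd.toRd N', N', N', C⟩ : LRule X) (fun _ => Rd.rule (etaRule X α) (fun j => Rd.var j)))) (fun i => srcRd X (mu X (Rd.var i)))
          (N'.sub (fun _ => M')) (fun i => mu X (Rd.var i))) = _
    simp only [rdSub, hvar1, hvar2, rw_var, sub_var, lw_varRd]
  have hmuT' : mu X (Rd.vcomp (Rd.rule (⟨[A], mu X (Rd.rule (⟨[B], Rd.toRd N, N, N, C⟩ : LRule X) (fun _ => Rd.rule (etaRule X α) (fun j => Rd.var j))), N.sub (fun _ => M), N.sub (fun _ => M'), C⟩ : LRule X) (fun j => Rd.var j)) (N.sub (fun _ => M')) (Rd.rule (⟨[A], Rd.rule β (fun _ => Rd.toRd M'), N.sub (fun _ => M'), N'.sub (fun _ => M'), C⟩ : LRule X) (fun j => Rd.var j)))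
      = Rd.vcomp
          (Rd.vcomp (mu X (Rd.rule (⟨[B], Rd.toRd N, N, N, C⟩ : LRule X) (fun _ => Rd.rule (etaRule X α) (fun j => Rd.var j)))) (N.sub (fun _ => M')) (Rd.toRd (N.sub (fun _ => M'))))
          (N.sub (fun _ => M'))
          (Rd.vcomp (Rd.rule β (fun _ => Rd.toRd M')) (N'.sub (fun _ => M')) (Rd.toRd (N'.sub (fun _ => M')))) := by
    show Rd.vcomp
        (rdSub (mu X (Rd.rule (⟨[B], Rd.toRd N, N, N, C⟩ : LRule X) (fun _ => Rd.rule (etaRule X α) (fun j => Rd.var j)))) (fun i => srcRd X (mu X (Rd.var i)))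
          (N.sub (fun _ => M')) (fun i => mu X (Rd.var i)))
        (N.sub (fun _ => M'))
        (rdSub (Rd.rule β (fun _ => Rd.toRd M')) (fun i => srcRd X (mu X (Rd.var i)))
          (N'.sub (fun _ => M')) (fun i => mu X (Rd.var i))) = _
    simp only [rdSub, hvar1, hvar2, rw_var, sub_var, lw_varRd]
  -- PEq steps
  have S1 : PEq X [A]
      (Rd.vcomp (Rd.rule β (fun _ => Rd.toRd M)) (N'.sub (fun _ => M)) (Rd.toRd (N'.sub (fun _ => M))))
      (Rd.rule β (fun _ => Rd.toRd M)) (N.sub (fun _ => M)) (N'.sub (fun _ => M)) C := PEq.unitR J1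
  have S2 : PEq X [A]
      (Rd.vcomp (mu X (Rd.rule (⟨[B], Rd.toRd N', N', N', C⟩ : LRule X) (fun _ => Rd.rule (etaRule X α) (fun j => Rd.var j)))) (N'.sub (fun _ => M')) (Rd.toRd (N'.sub (fun _ => M'))))
      (lw (fun _ => (Rd.vcomp (etaRd X α) M' (Rd.toRd M'))) N') (N'.sub (fun _ => M)) (N'.sub (fun _ => M')) C := by
    refine (PEq.unitR J5).trans ?_
    rw [hmuT2]; exact PEq.unitL J2
  have S3 : PEq X [A] (mu X (Rd.vcomp (Rd.rule (⟨[A], Rd.rule β (fun _ => Rd.toRd M), N.sub (fun _ => M), N'.sub (fun _ => M), C⟩ : LRule X) (fun j => Rd.var j)) (N'.sub (fun _ => M)) (Rd.rule (⟨[A], mu X (Rd.rule (⟨[B], Rd.toRd N', N', N', C⟩ : LRule X) (fun _ => Rd.rule (etaRule X α) (fun j => Rd.var j))), N'.sub (fun _ => M), N'.sub (fun _ => M'), C⟩ : LRule X) (fun j => Rd.var j))))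
      (Rd.vcomp (Rd.rule β (fun _ => Rd.toRd M)) (N'.sub (fun _ => M)) (lw (fun _ => (Rd.vcomp (etaRd X α) M' (Rd.toRd M'))) N'))
      (N.sub (fun _ => M)) (N'.sub (fun _ => M')) C := by
    rw [hmuT]; exact PEq.vcompCong S1 S2
  have S1' : PEq X [A]
      (Rd.vcomp (mu X (Rd.rule (⟨[B], Rd.toRd N, N, N, C⟩ : LRule X) (fun _ => Rd.rule (etaRule X α) (fun j => Rd.var j)))) (N.sub (fun _ => M')) (Rd.toRd (N.sub (fun _ => M'))))
      (lw (fun _ => (Rd.vcomp (etaRd X α) M' (Rd.toRd M'))) N) (N.sub (fun _ => M)) (N.sub (fun _ => M')) C := by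
    refine (PEq.unitR J5').trans ?_
    rw [hmuT2']; exact PEq.unitL J2'
  have S2' : PEq X [A]
      (Rd.vcomp (Rd.rule β (fun _ => Rd.toRd M')) (N'.sub (fun _ => M')) (Rd.toRd (N'.sub (fun _ => M'))))
      (Rd.rule β (fun _ => Rd.toRd M')) (N.sub (fun _ => M')) (N'.sub (fun _ => M')) C := PEq.unitR J1'
  have S3' : PEq X [A] (mu X (Rd.vcomp (Rd.rule (⟨[A], mu X (Rd.rule (⟨[B], Rd.toRd N, N, N, C⟩ : LRule X) (fun _ => Rd.rule (etaRule X α) (fun j => Rd.var j))), N.sub (fun _ => M), N.sub (fun _ => M'), C⟩ : LRule X) (fun j => Rd.var j)) (N.sub (fun _ => M')) (Rd.rule (⟨[A], Rd.rule β (fun _ => Rd.toRd M'), N.sub (fun _ => M'), N'.sub (fun _ => M'), C⟩ : LRule X) (fun j => Rd.var j))))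
      (Rd.vcomp (lw (fun _ => (Rd.vcomp (etaRd X α) M' (Rd.toRd M'))) N) (N.sub (fun _ => M')) (Rd.rule β (fun _ => Rd.toRd M')))
      (N.sub (fun _ => M)) (N'.sub (fun _ => M')) C := by
    rw [hmuT']; exact PEq.vcompCong S1' S2'
  have e2 : PEq X [A] (Rd.vcomp (etaRd X α) M' (Rd.toRd M')) (etaRd X α) M M' B := PEq.unitR Jα
  have comp1 : PEq X [A] (etaRd X α) (Rd.vcomp (Rd.toRd M) M (Rd.vcomp (etaRd X α) M' (Rd.toRd M'))) M M' B :=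
    ((PEq.unitL JQ0).trans e2).symm
  have comp2 : PEq X [A] (etaRd X α) (Rd.vcomp (Rd.vcomp (etaRd X α) M' (Rd.toRd M')) M' (Rd.toRd M')) M M' B :=
    ((PEq.unitR JQ0).trans e2).symm
  have S4 : PEq X [A] (Rd.rule β (fun _ => etaRd X α))
      (Rd.rule β (fun _ => Rd.vcomp (Rd.toRd M) M (Rd.vcomp (etaRd X α) M' (Rd.toRd M'))))
      (N.sub (fun _ => M)) (N'.sub (fun _ => M')) C := by
    have := PEq.ruleCong (fun i hi => (get_single hβc i hi).symm ▸ comp1)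
    rwa [hβl, hβr, hβt] at this
  have S4' : PEq X [A] (Rd.rule β (fun _ => etaRd X α))
      (Rd.rule β (fun _ => Rd.vcomp (Rd.vcomp (etaRd X α) M' (Rd.toRd M')) M' (Rd.toRd M')))
      (N.sub (fun _ => M)) (N'.sub (fun _ => M')) C := by
    have := PEq.ruleCong (fun i hi => (get_single hβc i hi).symm ▸ comp2)
    rwa [hβl, hβr, hβt] at this
  have hPtoM : ∀ i (hi : i < (X.ruleCtx β).length),
      RdJ X [A] (Rd.toRd M) M M ((X.ruleCtx β).get ⟨i, hi⟩) := fun i hi =>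
    (get_single hβc i hi).symm ▸ toRd_rdj hMty
  have hPtoM' : ∀ i (hi : i < (X.ruleCtx β).length),
      RdJ X [A] (Rd.toRd M') M' M' ((X.ruleCtx β).get ⟨i, hi⟩) := fun i hi =>
    (get_single hβc i hi).symm ▸ toRd_rdj hM'ty
  have hQQ : ∀ i (hi : i < (X.ruleCtx β).length),
      RdJ X [A] (Rd.vcomp (etaRd X α) M' (Rd.toRd M')) M M' ((X.ruleCtx β).get ⟨i, hi⟩) := fun i hi =>
    (get_single hβc i hi).symm ▸ JQ0
  have S5 : PEq X [A] (Rd.rule β (fun _ => Rd.vcomp (Rd.toRd M) M (Rd.vcomp (etaRd X α) M' (Rd.toRd M'))))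
      (Rd.vcomp (Rd.rule β (fun _ => Rd.toRd M)) (N'.sub (fun _ => M)) (lw (fun _ => (Rd.vcomp (etaRd X α) M' (Rd.toRd M'))) N'))
      (N.sub (fun _ => M)) (N'.sub (fun _ => M')) C := by
    have := PEq.ruleLift2 hPtoM hQQ
    rwa [hβl, hβr, hβt] at this
  have S5' : PEq X [A] (Rd.rule β (fun _ => Rd.vcomp (Rd.vcomp (etaRd X α) M' (Rd.toRd M')) M' (Rd.toRd M')))
      (Rd.vcomp (lw (fun _ => (Rd.vcomp (etaRd X α) M' (Rd.toRd M'))) N) (N.sub (fun _ => M')) (Rd.rule β (fun _ => Rd.toRd M')))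
      (N.sub (fun _ => M)) (N'.sub (fun _ => M')) C := by
    have := PEq.ruleLift1 hQQ hPtoM'
    rwa [hβl, hβr, hβt] at this
  have big1 : PEq X [A] (mu X (Rd.vcomp (Rd.rule (⟨[A], Rd.rule β (fun _ => Rd.toRd M), N.sub (fun _ => M), N'.sub (fun _ => M), C⟩ : LRule X) (fun j => Rd.var j)) (N'.sub (fun _ => M)) (Rd.rule (⟨[A], mu X (Rd.rule (⟨[B], Rd.toRd N', N', N', C⟩ : LRule X) (fun _ => Rd.rule (etaRule X α) (fun j => Rd.var j))), N'.sub (fun _ => M), N'.sub (fun _ => M'), C⟩ : LRule X) (fun j => Rd.var j)))) (Rd.rule β (fun _ => etaRd X α))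
      (N.sub (fun _ => M)) (N'.sub (fun _ => M')) C := S3.trans (S4.trans S5).symm
  have big2 : PEq X [A] (Rd.rule β (fun _ => etaRd X α)) (mu X (Rd.vcomp (Rd.rule (⟨[A], mu X (Rd.rule (⟨[B], Rd.toRd N, N, N, C⟩ : LRule X) (fun _ => Rd.rule (etaRule X α) (fun j => Rd.var j))), N.sub (fun _ => M), N.sub (fun _ => M'), C⟩ : LRule X) (fun j => Rd.var j)) (N.sub (fun _ => M')) (Rd.rule (⟨[A], Rd.rule β (fun _ => Rd.toRd M'), N.sub (fun _ => M'), N'.sub (fun _ => M'), C⟩ : LRule X) (fun j => Rd.var j))))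
      (N.sub (fun _ => M)) (N'.sub (fun _ => M')) C := (S4'.trans S5').trans S3'.symm
  -- mapRule computations
  have hmapT2 : Rd.mapRule (fun R₀ : LRule X => h R₀.ctx R₀.red) (Rd.rule (⟨[B], Rd.toRd N', N', N', C⟩ : LRule X) (fun _ => Rd.rule (etaRule X α) (fun j => Rd.var j)))
      = Rd.rule (h [B] (Rd.toRd N')) (fun _ => etaRd X α) := by
    show Rd.rule (h [B] (Rd.toRd N'))
      (fun _ => Rd.rule (h (X.ruleCtx α) (etaRd X α)) (fun j => Rd.var j)) = _
    rw [hEta α]; rfl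
  have hmapT2' : Rd.mapRule (fun R₀ : LRule X => h R₀.ctx R₀.red) (Rd.rule (⟨[B], Rd.toRd N, N, N, C⟩ : LRule X) (fun _ => Rd.rule (etaRule X α) (fun j => Rd.var j)))
      = Rd.rule (h [B] (Rd.toRd N)) (fun _ => etaRd X α) := by
    show Rd.rule (h [B] (Rd.toRd N))
      (fun _ => Rd.rule (h (X.ruleCtx α) (etaRd X α)) (fun j => Rd.var j)) = _
    rw [hEta α]; rfl
  have hc2 : h [A] (Rd.rule (h [B] (Rd.toRd N')) (fun _ => etaRd X α))
      = h [A] (mu X (Rd.rule (⟨[B], Rd.toRd N', N', N', C⟩ : LRule X) (fun _ => Rd.rule (etaRule X α) (fun j => Rd.var j)))) := by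
    rw [← hmapT2]; exact hAlg [A] (Rd.rule (⟨[B], Rd.toRd N', N', N', C⟩ : LRule X) (fun _ => Rd.rule (etaRule X α) (fun j => Rd.var j)))
  have hc3 : h [A] (Rd.rule (h [B] (Rd.toRd N)) (fun _ => etaRd X α))
      = h [A] (mu X (Rd.rule (⟨[B], Rd.toRd N, N, N, C⟩ : LRule X) (fun _ => Rd.rule (etaRule X α) (fun j => Rd.var j)))) := by
    rw [← hmapT2']; exact hAlg [A] (Rd.rule (⟨[B], Rd.toRd N, N, N, C⟩ : LRule X) (fun _ => Rd.rule (etaRule X α) (fun j => Rd.var j)))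
  have hmapT : Rd.mapRule (fun R₀ : LRule X => h R₀.ctx R₀.red) (Rd.vcomp (Rd.rule (⟨[A], Rd.rule β (fun _ => Rd.toRd M), N.sub (fun _ => M), N'.sub (fun _ => M), C⟩ : LRule X) (fun j => Rd.var j)) (N'.sub (fun _ => M)) (Rd.rule (⟨[A], mu X (Rd.rule (⟨[B], Rd.toRd N', N', N', C⟩ : LRule X) (fun _ => Rd.rule (etaRule X α) (fun j => Rd.var j))), N'.sub (fun _ => M), N'.sub (fun _ => M'), C⟩ : LRule X) (fun j => Rd.var j)))
      = Rd.vcomp (etaRd X (h [A] (Rd.rule β (fun _ => Rd.toRd M)))) (N'.sub (fun _ => M))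
          (etaRd X (h [A] (mu X (Rd.rule (⟨[B], Rd.toRd N', N', N', C⟩ : LRule X) (fun _ => Rd.rule (etaRule X α) (fun j => Rd.var j)))))) := rfl
  have hmapT' : Rd.mapRule (fun R₀ : LRule X => h R₀.ctx R₀.red) (Rd.vcomp (Rd.rule (⟨[A], mu X (Rd.rule (⟨[B], Rd.toRd N, N, N, C⟩ : LRule X) (fun _ => Rd.rule (etaRule X α) (fun j => Rd.var j))), N.sub (fun _ => M), N.sub (fun _ => M'), C⟩ : LRule X) (fun j => Rd.var j)) (N.sub (fun _ => M')) (Rd.rule (⟨[A], Rd.rule β (fun _ => Rd.toRd M'), N.sub (fun _ => M'), N'.sub (fun _ => M'), C⟩ : LRule X) (fun j => Rd.var j)))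
      = Rd.vcomp (etaRd X (h [A] (mu X (Rd.rule (⟨[B], Rd.toRd N, N, N, C⟩ : LRule X) (fun _ => Rd.rule (etaRule X α) (fun j => Rd.var j)))))) (N.sub (fun _ => M'))
          (etaRd X (h [A] (Rd.rule β (fun _ => Rd.toRd M')))) := rfl
  constructor
  · calc h [A] (Rd.vcomp (etaRd X (h [A] (Rd.rule β (fun _ => Rd.toRd M)))) (N'.sub (fun _ => M))
          (etaRd X (h [A] (Rd.rule (h [B] (Rd.toRd N')) (fun _ => etaRd X α)))))
        = h [A] (Rd.mapRule (fun R₀ : LRule X => h R₀.ctx R₀.red) (Rd.vcomp (Rd.rule (⟨[A], Rd.rule β (fun _ => Rd.toRd M), N.sub (fun _ => M), N'.sub (fun _ => M), C⟩ : LRule X) (fun j => Rd.var j)) (N'.sub (fun _ => M)) (Rd.rule (⟨[A], mu X (Rd.rule (⟨[B], Rd.toRd N', N', N', C⟩ : LRule X) (fun _ => Rd.rule (etaRule X α) (fun j => Rd.var j))), N'.sub (fun _ => M), N'.sub (fun _ => M'), C⟩ : LRule X) (fun j => Rd.var j)))) := by rw [hc2, hmapT]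
      _ = h [A] (mu X (Rd.vcomp (Rd.rule (⟨[A], Rd.rule β (fun _ => Rd.toRd M), N.sub (fun _ => M), N'.sub (fun _ => M), C⟩ : LRule X) (fun j => Rd.var j)) (N'.sub (fun _ => M)) (Rd.rule (⟨[A], mu X (Rd.rule (⟨[B], Rd.toRd N', N', N', C⟩ : LRule X) (fun _ => Rd.rule (etaRule X α) (fun j => Rd.var j))), N'.sub (fun _ => M), N'.sub (fun _ => M'), C⟩ : LRule X) (fun j => Rd.var j)))) := hAlg [A] (Rd.vcomp (Rd.rule (⟨[A], Rd.rule β (fun _ => Rd.toRd M), N.sub (fun _ => M), N'.sub (fun _ => M), C⟩ : LRule X) (fun j => Rd.var j)) (N'.sub (fun _ => M)) (Rd.rule (⟨[A], mu X (Rd.rule (⟨[B], Rd.toRd N', N', N', C⟩ : LRule X) (fun _ => Rd.rule (etaRule X α) (fun j => Rd.var j))), N'.sub (fun _ => M), N'.sub (fun _ => M'), C⟩ : LRule X) (fun j => Rd.var j)))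
      _ = h [A] (Rd.rule β (fun _ => etaRd X α)) := hPEq _ _ _ _ _ _ big1
  · calc h [A] (Rd.rule β (fun _ => etaRd X α))
        = h [A] (mu X (Rd.vcomp (Rd.rule (⟨[A], mu X (Rd.rule (⟨[B], Rd.toRd N, N, N, C⟩ : LRule X) (fun _ => Rd.rule (etaRule X α) (fun j => Rd.var j))), N.sub (fun _ => M), N.sub (fun _ => M'), C⟩ : LRule X) (fun j => Rd.var j)) (N.sub (fun _ => M')) (Rd.rule (⟨[A], Rd.rule β (fun _ => Rd.toRd M'), N.sub (fun _ => M'), N'.sub (fun _ => M'), C⟩ : LRule X) (fun j => Rd.var j)))) := hPEq _ _ _ _ _ _ big2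
      _ = h [A] (Rd.mapRule (fun R₀ : LRule X => h R₀.ctx R₀.red) (Rd.vcomp (Rd.rule (⟨[A], mu X (Rd.rule (⟨[B], Rd.toRd N, N, N, C⟩ : LRule X) (fun _ => Rd.rule (etaRule X α) (fun j => Rd.var j))), N.sub (fun _ => M), N.sub (fun _ => M'), C⟩ : LRule X) (fun j => Rd.var j)) (N.sub (fun _ => M')) (Rd.rule (⟨[A], Rd.rule β (fun _ => Rd.toRd M'), N.sub (fun _ => M'), N'.sub (fun _ => M'), C⟩ : LRule X) (fun j => Rd.var j)))) := (hAlg [A] (Rd.vcomp (Rd.rule (⟨[A], mu X (Rd.rule (⟨[B], Rd.toRd N, N, N, C⟩ : LRule X) (fun _ => Rd.rule (etaRule X α) (fun j => Rd.var j))), N.sub (fun _ => M), N.sub (fun _ => M'), C⟩ : LRule X) (fun j => Rd.var j)) (N.sub (fun _ => M')) (Rd.rule (⟨[A], Rd.rule β (fun _ => Rd.toRd M'), N.sub (fun _ => M'), N'.sub (fun _ => M'), C⟩ : LRule X) (fun j => Rd.var j)))).symm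
      _ = h [A] (Rd.vcomp (etaRd X (h [A] (Rd.rule (h [B] (Rd.toRd N)) (fun _ => etaRd X α))))
            (N.sub (fun _ => M')) (etaRd X (h [A] (Rd.rule β (fun _ => Rd.toRd M'))))) := by
          rw [hmapT', hc3]
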